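/- Deterministic version of Proposition 2.1, second estimate: let T > 0 and let φ : [0,T] → H be Bochner measurable with ∫₀ᵀ ‖φ_s‖² ds < ∞, and define ν_t = ∫₀ᵗ S_{t−s} φ_s ds. Then the map t ↦ ν_t from [0,T] to H is differentiable with derivative ν̇_t = ∫₀ᵗ S'_{t−s} φ_s ds, and for every t ∈ [0,T] one has ‖ν̇_t‖² ≤ T · ∫₀ᵀ ‖φ_s‖² ds. -/

import Mathlib

open MeasureTheory Real
open scoped InnerProductSpace ENNReal

set_option synthInstance.maxHeartbeats 1000000
set_option maxHeartbeats 1000000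

noncomputable section

/-- Lebesgue measure on the interval `(0, L)`. -/
def μL (L : ℝ) : Measure ℝ := volume.restrict (Set.Ioo (0:ℝ) L)

instance (L : ℝ) : IsFiniteMeasure (μL L) := by
  constructor
  unfold μL
  rw [Measure.restrict_apply_univ, Real.volume_Ioo]
  exact ENNReal.ofReal_lt_top

/-- The Hilbert space `H = L²((0,L), ℝ)`. -/
abbrev Hsp (L : ℝ) := Lp ℝ 2 (μL L)

/-- The function `ξ ↦ √(2/L) · sin(kπξ/L)`. -/
def efun (L : ℝ) (k : ℕ) : ℝ → ℝ :=
  fun ξ => Real.sqrt (2 / L) * Real.sin ((k : ℝ) * π * ξ / L)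

lemma efun_continuous (L : ℝ) (k : ℕ) : Continuous (efun L k) := by
  unfold efun; fun_prop

lemma efun_bound (L : ℝ) (k : ℕ) (ξ : ℝ) : ‖efun L k ξ‖ ≤ Real.sqrt (2 / L) := by
  have h1 : |Real.sin ((k : ℝ) * π * ξ / L)| ≤ 1 :=
    abs_le.mpr ⟨Real.neg_one_le_sin _, Real.sin_le_one _⟩
  calc ‖efun L k ξ‖ = |Real.sqrt (2 / L)| * |Real.sin ((k : ℝ) * π * ξ / L)| := by
        rw [Real.norm_eq_abs, efun, abs_mul]
    _ ≤ Real.sqrt (2 / L) * 1 := by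
        rw [abs_of_nonneg (Real.sqrt_nonneg _)]
        exact mul_le_mul_of_nonneg_left h1 (Real.sqrt_nonneg _)
    _ = Real.sqrt (2 / L) := mul_one _

lemma efun_memℒp (L : ℝ) (k : ℕ) : MemLp (efun L k) 2 (μL L) :=
  (memLp_top_of_bound (efun_continuous L k).aestronglyMeasurable _
      (ae_of_all _ (efun_bound L k))).mono_exponent le_top

/-- The eigenfunction `e_{k+1}` as an element of `H` (so `eb L k` is `e_{k+1}`,
i.e. the family `eb L` runs over `e_k`, `k ≥ 1`). -/
def eb (L : ℝ) (k : ℕ) : Hsp L := (efun_memℒp L (k + 1)).toLp (efun L (k + 1))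

/-- The eigenvalue `α_{k+1} = (k+1)²π²/L²` (so `alphaK L` runs over `α_k`, `k ≥ 1`). -/
def alphaK (L : ℝ) (k : ℕ) : ℝ := ((k : ℝ) + 1) ^ 2 * π ^ 2 / L ^ 2

/-- The Fourier coefficient `⟨u, e_{k+1}⟩`. -/
def coeff (L : ℝ) (u : Hsp L) (k : ℕ) : ℝ := ⟪u, eb L k⟫_ℝ

/-- The heat Green operator `G_t h = Σ_{k≥1} e^{−α_k t} ⟨h, e_k⟩ e_k`. -/
def Gop (L t : ℝ) (h : Hsp L) : Hsp L :=
  ∑' k, (Real.exp (-(alphaK L k) * t) * coeff L h k) • eb L k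

/-- The wave Green operator `S_t h = Σ_{k≥1} (sin(√α_k t)/√α_k) ⟨h, e_k⟩ e_k`. -/
def Sop (L t : ℝ) (h : Hsp L) : Hsp L :=
  ∑' k, ((Real.sin (Real.sqrt (alphaK L k) * t) / Real.sqrt (alphaK L k)) * coeff L h k) • eb L k

/-- The derived wave Green operator `S'_t h = Σ_{k≥1} cos(√α_k t) ⟨h, e_k⟩ e_k`. -/
def Sop' (L t : ℝ) (h : Hsp L) : Hsp L :=
  ∑' k, (Real.cos (Real.sqrt (alphaK L k) * t) * coeff L h k) • eb L k

/-- The second derived wave Green operator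
`S''_t h = −Σ_{k≥1} √α_k sin(√α_k t) ⟨h, e_k⟩ e_k`. -/
def Sop'' (L t : ℝ) (h : Hsp L) : Hsp L :=
  -∑' k, (Real.sqrt (alphaK L k) * Real.sin (Real.sqrt (alphaK L k) * t) * coeff L h k) • eb L k


lemma sin_mul_sin_eq (A B : ℝ) :
    Real.sin A * Real.sin B = (Real.cos (A - B) - Real.cos (A + B)) / 2 := by
  rw [Real.cos_sub, Real.cos_add]; ring

lemma integral_cos_smul (c : ℝ) (hc : c ≠ 0) (L : ℝ) :
    ∫ x in (0:ℝ)..L, Real.cos (c * x) = Real.sin (c * L) / c := by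
  rw [intervalIntegral.integral_comp_mul_left Real.cos hc]
  simp [integral_cos, div_eq_inv_mul]

lemma sine_integral (L : ℝ) (hL : 0 < L) (m n : ℕ) (hm : m ≠ 0) (hn : n ≠ 0) :
    ∫ x in (0:ℝ)..L, Real.sin ((m:ℝ) * π * x / L) * Real.sin ((n:ℝ) * π * x / L)
      = if m = n then L / 2 else 0 := by
  have key : ∀ x : ℝ, Real.sin ((m:ℝ) * π * x / L) * Real.sin ((n:ℝ) * π * x / L)
      = (Real.cos ((((m:ℝ) - n) * π / L) * x) - Real.cos ((((m:ℝ) + n) * π / L) * x)) / 2 := by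
    intro x
    rw [sin_mul_sin_eq]
    congr 2
    · congr 1; ring
    · congr 1; ring
  rw [intervalIntegral.integral_congr (g := fun x => (Real.cos ((((m:ℝ) - n) * π / L) * x) - Real.cos ((((m:ℝ) + n) * π / L) * x)) / 2) (fun x _ => key x)]
  have hL' : L ≠ 0 := ne_of_gt hL
  have hc2 : ((m:ℝ) + n) * π / L ≠ 0 := by
    apply div_ne_zero _ hL'
    apply mul_ne_zero _ Real.pi_ne_zero
    positivity
  have int1 : ∀ c : ℝ, IntervalIntegrable (fun x => Real.cos (c * x)) volume 0 L :=
    fun c => (Real.continuous_cos.comp (continuous_const.mul continuous_id)).intervalIntegrable _ _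
  have hsplit : ∫ x in (0:ℝ)..L, (Real.cos ((((m:ℝ) - n) * π / L) * x) - Real.cos ((((m:ℝ) + n) * π / L) * x)) / 2
      = ((∫ x in (0:ℝ)..L, Real.cos ((((m:ℝ) - n) * π / L) * x)) - ∫ x in (0:ℝ)..L, Real.cos ((((m:ℝ) + n) * π / L) * x)) / 2 := by
    rw [intervalIntegral.integral_div, intervalIntegral.integral_sub (int1 _) (int1 _)]
  rw [hsplit]
  have h2 : ∫ x in (0:ℝ)..L, Real.cos ((((m:ℝ) + n) * π / L) * x) = 0 := by
    rw [integral_cos_smul _ hc2]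
    have : ((m:ℝ) + n) * π / L * L = ((m + n : ℕ) : ℝ) * π := by push_cast; field_simp
    rw [this, Real.sin_nat_mul_pi, zero_div]
  rw [h2]
  by_cases hmn : m = n
  · subst hmn
    simp
  · rw [if_neg hmn]
    have hc1 : ((m:ℝ) - n) * π / L ≠ 0 := by
      apply div_ne_zero _ hL'
      apply mul_ne_zero _ Real.pi_ne_zero
      intro h
      apply hmn
      exact_mod_cast sub_eq_zero.mp h
    rw [integral_cos_smul _ hc1]
    have : ((m:ℝ) - n) * π / L * L = (((m:ℤ) - n : ℤ) : ℝ) * π := by push_cast; field_simp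
    rw [this, Real.sin_int_mul_pi, zero_div, sub_zero, zero_div]

lemma inner_eb (L : ℝ) (hL : 0 < L) (j k : ℕ) :
    ⟪eb L j, eb L k⟫_ℝ = if j = k then 1 else 0 := by
  have hco : ∫ a, (eb L j : ℝ → ℝ) a * (eb L k : ℝ → ℝ) a ∂(μL L)
      = ∫ a, efun L (j+1) a * efun L (k+1) a ∂(μL L) := by
    apply integral_congr_ae
    filter_upwards [(efun_memℒp L (j+1)).coeFn_toLp, (efun_memℒp L (k+1)).coeFn_toLp] with a h1 h2
    rw [eb, eb, h1, h2]
  have : ⟪eb L j, eb L k⟫_ℝ = ∫ a, (eb L j : ℝ → ℝ) a * (eb L k : ℝ → ℝ) a ∂(μL L) := by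
    rw [MeasureTheory.L2.inner_def]; congr 1; funext a; simp [mul_comm]
  rw [this, hco]
  have hE : ∀ a : ℝ, efun L (j+1) a * efun L (k+1) a
      = (2 / L) * (Real.sin (((j:ℝ)+1) * π * a / L) * Real.sin (((k:ℝ)+1) * π * a / L)) := by
    intro a
    unfold efun
    push_cast
    rw [show Real.sqrt (2/L) * Real.sin (((j:ℝ)+1) * π * a / L) * (Real.sqrt (2/L) * Real.sin (((k:ℝ)+1) * π * a / L)) = (Real.sqrt (2/L) * Real.sqrt (2/L)) * (Real.sin (((j:ℝ)+1) * π * a / L) * Real.sin (((k:ℝ)+1) * π * a / L)) from by ring]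
    rw [Real.mul_self_sqrt (by positivity)]
  simp only [hE]
  have hmu : ∫ a, (2 / L) * (Real.sin (((j:ℝ)+1) * π * a / L) * Real.sin (((k:ℝ)+1) * π * a / L)) ∂(μL L)
      = ∫ a in (0:ℝ)..L, (2 / L) * (Real.sin (((j:ℝ)+1) * π * a / L) * Real.sin (((k:ℝ)+1) * π * a / L)) := by
    rw [μL, intervalIntegral.integral_of_le hL.le, ← MeasureTheory.integral_Ioc_eq_integral_Ioo]
  rw [hmu, intervalIntegral.integral_const_mul]
  rw [show ((j:ℝ)+1) = ((j+1:ℕ):ℝ) from by push_cast; ring,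
      show ((k:ℝ)+1) = ((k+1:ℕ):ℝ) from by push_cast; ring,
      sine_integral L hL (j+1) (k+1) (Nat.succ_ne_zero j) (Nat.succ_ne_zero k)]
  by_cases h : j = k
  · subst h; simp; exact hL.ne'
  · simp [h]

lemma eb_orthonormal (L : ℝ) (hL : 0 < L) : Orthonormal ℝ (eb L) := by
  rw [orthonormal_iff_ite]
  intro i j
  exact inner_eb L hL i j

lemma coeff_sq_summable (L : ℝ) (hL : 0 < L) (h : Hsp L) :
    Summable (fun k => (coeff L h k) ^ 2) := by
  have := (eb_orthonormal L hL).inner_products_summable h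
  refine this.congr fun k => ?_
  rw [real_inner_comm]
  rw [Real.norm_eq_abs, sq_abs]
  rfl

lemma coeff_tsum_le (L : ℝ) (hL : 0 < L) (h : Hsp L) :
    ∑' k, (coeff L h k) ^ 2 ≤ ‖h‖ ^ 2 := by
  have := (eb_orthonormal L hL).tsum_inner_products_le h
  refine le_trans (le_of_eq ?_) this
  refine tsum_congr fun k => ?_
  rw [real_inner_comm, Real.norm_eq_abs, sq_abs]
  rfl

lemma eb_summable_smul (L : ℝ) (hL : 0 < L) {a : ℕ → ℝ} (ha : Summable fun k => a k ^ 2) :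
    Summable (fun k => a k • eb L k) := by
  have hON := eb_orthonormal L hL
  have hOF := hON.orthogonalFamily
  have := (hOF.summable_iff_norm_sq_summable a).mpr (by
    refine ha.congr fun k => ?_
    rw [Real.norm_eq_abs, sq_abs])
  refine this.congr fun k => ?_
  simp [LinearIsometry.toSpanSingleton_apply]

lemma eb_hasSum_norm_sq (L : ℝ) (hL : 0 < L) {a : ℕ → ℝ} (ha : Summable fun k => a k ^ 2) :
    HasSum (fun k => a k ^ 2) (‖∑' k, a k • eb L k‖ ^ 2) := by
  have hON := eb_orthonormal L hL
  have hOF := hON.orthogonalFamily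
  have hS : Summable (fun k => a k • eb L k) := eb_summable_smul L hL ha
  have hhs := hS.hasSum
  have hcont : Continuous (fun x : Hsp L => ‖x‖ ^ 2) := by fun_prop
  have htend := (hcont.continuousAt.tendsto).comp hhs
  have heq : ∀ s : Finset ℕ, ‖∑ k ∈ s, a k • eb L k‖ ^ 2 = ∑ k ∈ s, a k ^ 2 := by
    intro s
    have := hOF.norm_sum a s
    simp only [LinearIsometry.toSpanSingleton_apply] at this
    rw [this]
    refine Finset.sum_congr rfl fun k _ => ?_
    rw [Real.norm_eq_abs, sq_abs]
  refine HasSum.congr_fun ?_ (fun k => rfl)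
  rw [HasSum]
  refine htend.congr fun s => ?_
  exact (heq s)

lemma eb_norm_tsum_sq (L : ℝ) (hL : 0 < L) {a : ℕ → ℝ} (ha : Summable fun k => a k ^ 2) :
    ‖∑' k, a k • eb L k‖ ^ 2 = ∑' k, a k ^ 2 :=
  (eb_hasSum_norm_sq L hL ha).tsum_eq.symm

lemma abs_sin_sub_sin (x y : ℝ) : |Real.sin x - Real.sin y| ≤ |x - y| := by
  rw [Real.sin_sub_sin, abs_mul, abs_mul, abs_two]
  have h1 : |Real.sin ((x - y)/2)| ≤ |(x - y)/2| := Real.abs_sin_le_abs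
  have h2 : |Real.cos ((x + y)/2)| ≤ 1 := Real.abs_cos_le_one _
  have h3 : |(x - y)/2| = |x - y|/2 := by rw [abs_div]; norm_num
  nlinarith [abs_nonneg (Real.sin ((x-y)/2)), abs_nonneg ((x-y)/2), abs_nonneg (x-y),
    abs_nonneg (Real.cos ((x+y)/2))]

lemma sqrtAlpha_pos {L : ℝ} (hL : 0 < L) (k : ℕ) : 0 < Real.sqrt (alphaK L k) := by
  apply Real.sqrt_pos.mpr
  unfold alphaK
  positivity

lemma sinc_lip {a : ℝ} (ha : 0 < a) (x y : ℝ) :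
    |Real.sin (a * x) / a - Real.sin (a * y) / a| ≤ |x - y| := by
  rw [div_sub_div_same, abs_div, abs_of_pos ha]
  rw [div_le_iff₀ ha]
  calc |Real.sin (a*x) - Real.sin (a*y)| ≤ |a*x - a*y| := abs_sin_sub_sin _ _
    _ = |x - y| * a := by rw [← mul_sub, abs_mul, abs_of_pos ha, mul_comm]

lemma mult_summable (L : ℝ) (hL : 0 < L) (h : Hsp L) {c : ℕ → ℝ} {M : ℝ}
    (hc : ∀ k, |c k| ≤ M) : Summable (fun k => (c k * coeff L h k) ^ 2) := by
  refine Summable.of_nonneg_of_le (fun k => sq_nonneg _) (fun k => ?_)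
    ((coeff_sq_summable L hL h).mul_left (M ^ 2))
  have : (c k)^2 ≤ M^2 := by
    rw [← sq_abs (c k)]
    have h0 : (0:ℝ) ≤ |c k| := abs_nonneg _
    nlinarith [hc k]
  calc (c k * coeff L h k)^2 = (c k)^2 * (coeff L h k)^2 := by ring
    _ ≤ M^2 * (coeff L h k)^2 := by nlinarith [sq_nonneg (coeff L h k)]

lemma opA_norm_le (L : ℝ) (hL : 0 < L) (h : Hsp L) {c : ℕ → ℝ} {M : ℝ} (hM : 0 ≤ M)
    (hc : ∀ k, |c k| ≤ M) :
    ‖∑' k, (c k * coeff L h k) • eb L k‖ ≤ M * ‖h‖ := by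
  have hs := mult_summable L hL h hc
  have h1 : ‖∑' k, (c k * coeff L h k) • eb L k‖ ^ 2 = ∑' k, (c k * coeff L h k) ^ 2 :=
    eb_norm_tsum_sq L hL hs
  have h2 : ∑' k, (c k * coeff L h k) ^ 2 ≤ M^2 * ∑' k, (coeff L h k)^2 := by
    rw [← tsum_mul_left]
    refine Summable.tsum_le_tsum (fun k => ?_) hs ((coeff_sq_summable L hL h).mul_left _)
    have : (c k)^2 ≤ M^2 := by
      rw [← sq_abs (c k)]; nlinarith [hc k, abs_nonneg (c k)]
    calc (c k * coeff L h k)^2 = (c k)^2 * (coeff L h k)^2 := by ring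
      _ ≤ M^2 * (coeff L h k)^2 := by nlinarith [sq_nonneg (coeff L h k)]
  have h3 : M^2 * ∑' k, (coeff L h k)^2 ≤ M^2 * ‖h‖^2 :=
    mul_le_mul_of_nonneg_left (coeff_tsum_le L hL h) (sq_nonneg M)
  have h4 : ‖∑' k, (c k * coeff L h k) • eb L k‖ ^ 2 ≤ (M * ‖h‖)^2 := by
    rw [h1]; calc _ ≤ _ := h2
      _ ≤ M^2 * ‖h‖^2 := h3
      _ = (M * ‖h‖)^2 := by ring
  exact (pow_le_pow_iff_left₀ (norm_nonneg _) (by positivity) two_ne_zero).mp h4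

lemma opB_sub (L : ℝ) (hL : 0 < L) (h : Hsp L) {c1 c2 : ℕ → ℝ} {M1 M2 : ℝ}
    (hc1 : ∀ k, |c1 k| ≤ M1) (hc2 : ∀ k, |c2 k| ≤ M2) :
    (∑' k, (c1 k * coeff L h k) • eb L k) - (∑' k, (c2 k * coeff L h k) • eb L k)
      = ∑' k, ((c1 k - c2 k) * coeff L h k) • eb L k := by
  have hs1 := eb_summable_smul L hL (mult_summable L hL h hc1)
  have hs2 := eb_summable_smul L hL (mult_summable L hL h hc2)
  rw [← Summable.tsum_sub hs1 hs2]
  refine tsum_congr fun k => ?_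
  rw [← sub_smul]; ring_nf

lemma opC_smul (L : ℝ) (hL : 0 < L) (h : Hsp L) {c : ℕ → ℝ} {M : ℝ} (hc : ∀ k, |c k| ≤ M)
    (r : ℝ) :
    r • ∑' k, (c k * coeff L h k) • eb L k = ∑' k, ((r * c k) * coeff L h k) • eb L k := by
  have hs := eb_summable_smul L hL (mult_summable L hL h hc)
  rw [← tsum_const_smul'' r]
  refine tsum_congr fun k => ?_
  rw [smul_smul]; ring_nf

section Ops
open Filter
variable {L : ℝ}

lemma cS_bound (hL : 0 < L) (t : ℝ) (k : ℕ) :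
    |Real.sin (Real.sqrt (alphaK L k) * t) / Real.sqrt (alphaK L k)| ≤ |t| := by
  have ha := sqrtAlpha_pos hL k
  have := sinc_lip ha t 0
  simpa using this

lemma cS_lip (hL : 0 < L) (x y : ℝ) (k : ℕ) :
    |Real.sin (Real.sqrt (alphaK L k) * x) / Real.sqrt (alphaK L k)
      - Real.sin (Real.sqrt (alphaK L k) * y) / Real.sqrt (alphaK L k)| ≤ |x - y| :=
  sinc_lip (sqrtAlpha_pos hL k) x y

lemma norm_Sop_le (hL : 0 < L) (t : ℝ) (h : Hsp L) : ‖Sop L t h‖ ≤ |t| * ‖h‖ := by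
  rw [Sop]
  exact opA_norm_le L hL h (abs_nonneg t) (cS_bound hL t)

lemma norm_Sop'_le (hL : 0 < L) (t : ℝ) (h : Hsp L) : ‖Sop' L t h‖ ≤ ‖h‖ := by
  rw [Sop']
  simpa using opA_norm_le L hL h zero_le_one
    (fun k => Real.abs_cos_le_one (Real.sqrt (alphaK L k) * t))

lemma Sop_sub (hL : 0 < L) (x y : ℝ) (h : Hsp L) :
    Sop L x h - Sop L y h = ∑' k, ((Real.sin (Real.sqrt (alphaK L k) * x) / Real.sqrt (alphaK L k)
      - Real.sin (Real.sqrt (alphaK L k) * y) / Real.sqrt (alphaK L k)) * coeff L h k) • eb L k := by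
  rw [Sop, Sop]
  exact opB_sub L hL h (cS_bound hL x) (cS_bound hL y)

lemma norm_Sop_sub_le (hL : 0 < L) (x y : ℝ) (h : Hsp L) :
    ‖Sop L x h - Sop L y h‖ ≤ |x - y| * ‖h‖ := by
  rw [Sop_sub hL x y h]
  exact opA_norm_le L hL h (abs_nonneg _) (cS_lip hL x y)

lemma hasDerivAt_Sop (hL : 0 < L) (h : Hsp L) (t : ℝ) :
    HasDerivAt (fun u => Sop L u h) (Sop' L t h) t := by
  classical
  set a : ℕ → ℝ := fun k => Real.sqrt (alphaK L k) with ha_def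
  have ha : ∀ k, 0 < a k := sqrtAlpha_pos hL
  set d : ℕ → ℝ := fun k => coeff L h k with hd_def
  set c : ℝ → ℕ → ℝ := fun r k => Real.sin (a k * r) / a k with hc_def
  set q : ℝ → ℕ → ℝ := fun r k => (r - t)⁻¹ * (c r k - c t k) - Real.cos (a k * t) with hq_def
  have hc1bound : ∀ r k, |(r - t)⁻¹ * (c r k - c t k)| ≤ 1 := by
    intro r k
    rcases eq_or_ne r t with rfl | hne
    · simp [hc_def]
    · rw [abs_mul, abs_inv]
      have h1 : |c r k - c t k| ≤ |r - t| := sinc_lip (ha k) r t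
      have h2 : (0:ℝ) < |r - t| := abs_pos.mpr (sub_ne_zero.mpr hne)
      rw [inv_mul_le_iff₀ h2, mul_one]
      exact h1
  have hqbound : ∀ r k, |q r k| ≤ 2 := by
    intro r k
    have := hc1bound r k
    have hcos := Real.abs_cos_le_one (a k * t)
    calc |q r k| ≤ |(r - t)⁻¹ * (c r k - c t k)| + |Real.cos (a k * t)| := abs_sub _ _
      _ ≤ 1 + 1 := add_le_add this hcos
      _ = 2 := by norm_num
  -- step 1 : representation of the centered slope
  have hrep : ∀ r : ℝ, (r - t)⁻¹ • (Sop L r h - Sop L t h) - Sop' L t h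
      = ∑' k, (q r k * d k) • eb L k := by
    intro r
    rw [Sop_sub hL r t h]
    rw [opC_smul L hL h (cS_lip hL r t) ((r - t)⁻¹)]
    rw [Sop']
    exact opB_sub L hL h (hc1bound r) (fun k => Real.abs_cos_le_one (a k * t))
  -- step 3 : tendsto of the sum of squares
  have hptwise : ∀ k, Tendsto (fun r => (q r k * d k) ^ 2) (nhdsWithin t {t}ᶜ) (nhds 0) := by
    intro k
    have hder : HasDerivAt (fun u => Real.sin (a k * u) / a k) (Real.cos (a k * t)) t := by
      have h1 : HasDerivAt (fun u : ℝ => a k * u) (a k) t := by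
        simpa using (hasDerivAt_id t).const_mul (a k)
      have h2 := (Real.hasDerivAt_sin (a k * t)).comp t h1
      have h3 := h2.div_const (a k)
      have : Real.cos (a k * t) * a k / a k = Real.cos (a k * t) :=
        mul_div_cancel_right₀ _ (ne_of_gt (ha k))
      rwa [this] at h3
    have hslope := hasDerivAt_iff_tendsto_slope.mp hder
    have hq0 : Tendsto (fun r => q r k) (nhdsWithin t {t}ᶜ) (nhds 0) := by
      have := hslope.sub_const (Real.cos (a k * t))
      rw [sub_self] at this
      refine this.congr fun r => ?_
      simp only [slope, hq_def, hc_def, vsub_eq_sub, smul_eq_mul]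
    have hcont : Continuous (fun x : ℝ => (x * d k) ^ 2) := by fun_prop
    have := (hcont.continuousAt (x := 0)).tendsto.comp hq0
    simpa [Function.comp_def] using this
  have hsq : Tendsto (fun r => ∑' k, (q r k * d k) ^ 2) (nhdsWithin t {t}ᶜ) (nhds 0) := by
    have hbd : Summable (fun k => 4 * d k ^ 2) := (coeff_sq_summable L hL h).mul_left 4
    have := tendsto_tsum_of_dominated_convergence (f := fun r k => (q r k * d k) ^ 2)
      (g := fun _ => (0:ℝ)) (bound := fun k => 4 * d k ^ 2) hbd hptwise
      (Filter.Eventually.of_forall fun r k => by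
        have hq := hqbound r k
        have h4 : q r k ^ 2 ≤ 4 := by nlinarith [sq_abs (q r k), abs_nonneg (q r k)]
        have : (q r k * d k) ^ 2 ≤ 4 * d k ^ 2 := by
          nlinarith [mul_nonneg (sub_nonneg.mpr h4) (sq_nonneg (d k))]
        rw [Real.norm_eq_abs, abs_of_nonneg (sq_nonneg _)]
        exact this)
    simpa using this
  -- step 4: conclude
  rw [hasDerivAt_iff_tendsto_slope]
  rw [tendsto_iff_norm_sub_tendsto_zero]
  have hnorm : ∀ r : ℝ, ‖slope (fun u => Sop L u h) t r - Sop' L t h‖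
      = Real.sqrt (∑' k, (q r k * d k) ^ 2) := by
    intro r
    have h1 : slope (fun u => Sop L u h) t r - Sop' L t h = ∑' k, (q r k * d k) • eb L k := by
      rw [← hrep r]; simp only [slope, vsub_eq_sub]
    rw [h1]
    have hsum : Summable (fun k => (q r k * d k) ^ 2) := mult_summable L hL h (hqbound r)
    rw [← Real.sqrt_sq (norm_nonneg _), eb_norm_tsum_sq L hL hsum]
  simp only [hnorm]
  have := (Real.continuous_sqrt.continuousAt (x := 0)).tendsto.comp hsq
  simpa [Function.comp_def] using this

end Ops

section Meas
open Filter
variable {L : ℝ}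

lemma aesm_op (hL : 0 < L) {μ : Measure ℝ} {ψ : ℝ → Hsp L}
    (hψ : AEStronglyMeasurable ψ μ) (C : ℝ → ℕ → ℝ)
    (hC : ∀ k, AEStronglyMeasurable (fun s => C s k) μ)
    (hC2 : ∀ s, ∃ M, ∀ k, |C s k| ≤ M) :
    AEStronglyMeasurable (fun s => ∑' k, (C s k * coeff L (ψ s) k) • eb L k) μ := by
  have hcoeff : ∀ k, AEStronglyMeasurable (fun s => coeff L (ψ s) k) μ := by
    intro k
    have hcont : Continuous (fun u : Hsp L => (inner ℝ u (eb L k) : ℝ)) :=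
      continuous_id.inner continuous_const
    exact hcont.comp_aestronglyMeasurable hψ
  have hpart : ∀ n : ℕ, AEStronglyMeasurable
      (fun s => ∑ k ∈ Finset.range n, (C s k * coeff L (ψ s) k) • eb L k) μ := by
    intro n
    apply Finset.aestronglyMeasurable_fun_sum
    intro k _
    exact ((hC k).mul (hcoeff k)).smul_const _
  refine aestronglyMeasurable_of_tendsto_ae atTop hpart (ae_of_all _ fun s => ?_)
  obtain ⟨M, hM⟩ := hC2 s
  have hsum : Summable (fun k => (C s k * coeff L (ψ s) k) • eb L k) :=
    eb_summable_smul L hL (mult_summable L hL (ψ s) hM)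
  exact hsum.hasSum.tendsto_sum_nat

lemma aesm_Sop (hL : 0 < L) {μ : Measure ℝ} {ψ : ℝ → Hsp L}
    (hψ : AEStronglyMeasurable ψ μ) (x : ℝ) :
    AEStronglyMeasurable (fun s => Sop L (x - s) (ψ s)) μ := by
  have := aesm_op hL hψ
    (fun s k => Real.sin (Real.sqrt (alphaK L k) * (x - s)) / Real.sqrt (alphaK L k))
    (fun k => (Continuous.aestronglyMeasurable (by fun_prop)))
    (fun s => ⟨|x - s|, fun k => cS_bound hL (x - s) k⟩)
  exact this

lemma aesm_Sop' (hL : 0 < L) {μ : Measure ℝ} {ψ : ℝ → Hsp L}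
    (hψ : AEStronglyMeasurable ψ μ) (x : ℝ) :
    AEStronglyMeasurable (fun s => Sop' L (x - s) (ψ s)) μ := by
  have := aesm_op hL hψ
    (fun s k => Real.cos (Real.sqrt (alphaK L k) * (x - s)))
    (fun k => (Continuous.aestronglyMeasurable (by fun_prop)))
    (fun s => ⟨1, fun k => Real.abs_cos_le_one _⟩)
  exact this

end Meas

section IntLemmas
open Filter Set

lemma cs_lemma {t : ℝ} (ht : 0 ≤ t) {f : ℝ → ℝ}
    (hf_meas : AEStronglyMeasurable f (volume.restrict (Set.Ioc (0:ℝ) t)))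
    (hnn : ∀ s, 0 ≤ f s)
    (hfi : IntegrableOn (fun s => f s ^ 2) (Set.Ioc (0:ℝ) t) volume) :
    (∫ s in (0:ℝ)..t, f s) ^ 2 ≤ t * ∫ s in (0:ℝ)..t, f s ^ 2 := by
  set μ : Measure ℝ := volume.restrict (Set.Ioc (0:ℝ) t) with hμ
  have hconj : Real.HolderConjugate 2 2 := Real.HolderConjugate.two_two
  have hmemf : MemLp f (ENNReal.ofReal 2) μ := by
    rw [show ENNReal.ofReal 2 = 2 by norm_num]
    exact (memLp_two_iff_integrable_sq hf_meas).mpr hfi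
  have hmemg : MemLp (fun _ : ℝ => (1:ℝ)) (ENNReal.ofReal 2) μ := memLp_const 1
  have hH := integral_mul_le_Lp_mul_Lq_of_nonneg hconj (ae_of_all _ hnn)
    (ae_of_all _ fun _ => zero_le_one) hmemf hmemg
  simp only [mul_one] at hH
  have hrpow : ∀ x : ℝ, 0 ≤ x → x ^ (2:ℝ) = x ^ 2 := by
    intro x hx
    rw [show (2:ℝ) = ((2:ℕ):ℝ) by norm_num, Real.rpow_natCast]
  have h1 : ∫ a, f a ^ (2:ℝ) ∂μ = ∫ a, f a ^ 2 ∂μ :=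
    integral_congr_ae (ae_of_all _ fun a => hrpow _ (hnn a))
  have h2 : ∫ _a, (1:ℝ) ^ (2:ℝ) ∂μ = t := by
    simp [hμ, Real.volume_Ioc, ht]
  rw [h1, h2] at hH
  have hItoSet : ∫ s in (0:ℝ)..t, f s = ∫ a, f a ∂μ := by
    rw [intervalIntegral.integral_of_le ht]
  have hItoSet2 : ∫ s in (0:ℝ)..t, f s ^ 2 = ∫ a, f a ^ 2 ∂μ := by
    rw [intervalIntegral.integral_of_le ht]
  rw [hItoSet, hItoSet2]
  have hf2nn : 0 ≤ ∫ a, f a ^ 2 ∂μ := integral_nonneg fun a => sq_nonneg _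
  have hfnn : 0 ≤ ∫ a, f a ∂μ := integral_nonneg hnn
  calc (∫ a, f a ∂μ) ^ 2 ≤ ((∫ a, f a ^ 2 ∂μ) ^ (1/2:ℝ) * t ^ (1/2:ℝ)) ^ 2 := by
        apply pow_le_pow_left₀ hfnn hH
    _ = ((∫ a, f a ^ 2 ∂μ) ^ (1/2:ℝ)) ^ 2 * (t ^ (1/2:ℝ)) ^ 2 := by ring
    _ = (∫ a, f a ^ 2 ∂μ) * t := by
        rw [← hrpow _ (by positivity), ← hrpow _ (by positivity),
          ← Real.rpow_mul hf2nn, ← Real.rpow_mul ht]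
        norm_num
    _ = t * ∫ a, f a ^ 2 ∂μ := mul_comm _ _

end IntLemmas

section IntInt
open Filter Set
variable {L : ℝ}

lemma intInt_Sop (hL : 0 < L) {T : ℝ} {φ : ℝ → Hsp L}
    (hφm : AEStronglyMeasurable φ (volume.restrict (Set.Ioc (0:ℝ) T)))
    (hφn : IntegrableOn (fun s => ‖φ s‖) (Set.Ioc (0:ℝ) T) volume) {u v : ℝ}
    (huv : Set.uIoc u v ⊆ Set.Ioc (0:ℝ) T) (hT : 0 ≤ T) (x : ℝ) :
    IntervalIntegrable (fun s => Sop L (x - s) (φ s)) volume u v := by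
  rw [intervalIntegrable_iff]
  have hφm' : AEStronglyMeasurable φ (volume.restrict (Set.uIoc u v)) :=
    hφm.mono_measure (Measure.restrict_mono huv le_rfl)
  refine Integrable.mono' ((hφn.mono_set huv).const_mul (|x| + T)) (aesm_Sop hL hφm' x) ?_
  refine (ae_restrict_iff' measurableSet_uIoc).mpr (ae_of_all _ fun s hs => ?_)
  have hsT := huv hs
  have h1 : ‖Sop L (x - s) (φ s)‖ ≤ |x - s| * ‖φ s‖ := norm_Sop_le hL _ _
  have h2 : |x - s| ≤ |x| + T := by
    have : |x - s| ≤ |x| + |s| := by rw [sub_eq_add_neg]; exact (abs_add_le _ _).trans (by rw [abs_neg])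
    have hsabs : |s| ≤ T := by rw [abs_of_pos hsT.1]; exact hsT.2
    linarith
  exact h1.trans (mul_le_mul_of_nonneg_right h2 (norm_nonneg _))

lemma intInt_Sop' (hL : 0 < L) {T : ℝ} {φ : ℝ → Hsp L}
    (hφm : AEStronglyMeasurable φ (volume.restrict (Set.Ioc (0:ℝ) T)))
    (hφn : IntegrableOn (fun s => ‖φ s‖) (Set.Ioc (0:ℝ) T) volume) {u v : ℝ}
    (huv : Set.uIoc u v ⊆ Set.Ioc (0:ℝ) T) (x : ℝ) :
    IntervalIntegrable (fun s => Sop' L (x - s) (φ s)) volume u v := by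
  rw [intervalIntegrable_iff]
  have hφm' : AEStronglyMeasurable φ (volume.restrict (Set.uIoc u v)) :=
    hφm.mono_measure (Measure.restrict_mono huv le_rfl)
  refine Integrable.mono' (hφn.mono_set huv) (aesm_Sop' hL hφm' x) ?_
  exact (ae_restrict_iff' measurableSet_uIoc).mpr
    (ae_of_all _ fun s _ => norm_Sop'_le hL _ _)

lemma tendsto_slope_center (hL : 0 < L) (h : Hsp L) (s t : ℝ) :
    Filter.Tendsto (fun r => (r - t)⁻¹ • (Sop L (r - s) h - Sop L (t - s) h) - Sop' L (t - s) h)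
      (nhdsWithin t {t}ᶜ) (nhds 0) := by
  have hder : HasDerivAt (fun r => Sop L (r - s) h) (Sop' L (t - s) h) t := by
    have h1 : HasDerivAt (fun r : ℝ => r - s) 1 t := (hasDerivAt_id t).sub_const s
    have h2 := (hasDerivAt_Sop hL h (t - s)).scomp t h1
    simpa [Function.comp_def] using h2
  have hslope := hasDerivAt_iff_tendsto_slope.mp hder
  have := hslope.sub_const (Sop' L (t - s) h)
  rw [sub_self] at this
  refine this.congr fun r => ?_
  simp only [slope, vsub_eq_sub]

end IntInt

open Filter Set in
private theorem stmt_11_aux (L : ℝ) (hL : 0 < L) (T : ℝ) (hT : 0 < T) (φ : ℝ → Hsp L)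
    (hmeas : AEStronglyMeasurable φ (volume.restrict (Set.Ioc (0:ℝ) T)))
    (hint : IntervalIntegrable (fun s => ‖φ s‖ ^ 2) volume 0 T) :
    ∀ t ∈ Set.Icc (0:ℝ) T,
      HasDerivWithinAt (fun r => ∫ s in (0:ℝ)..r, Sop L (r - s) (φ s))
        (∫ s in (0:ℝ)..t, Sop' L (t - s) (φ s)) (Set.Icc (0:ℝ) T) t ∧
      ‖∫ s in (0:ℝ)..t, Sop' L (t - s) (φ s)‖ ^ 2 ≤ T * ∫ s in (0:ℝ)..T, ‖φ s‖ ^ 2 := by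
  intro t ht
  obtain ⟨ht0, htT⟩ := ht
  -- integrability of ‖φ‖ on (0, T]
  have hsqOn : IntegrableOn (fun s => ‖φ s‖ ^ 2) (Set.Ioc (0:ℝ) T) volume :=
    (intervalIntegrable_iff_integrableOn_Ioc_of_le hT.le).mp hint
  have hφn : IntegrableOn (fun s => ‖φ s‖) (Set.Ioc (0:ℝ) T) volume := by
    have hconst : IntegrableOn (fun _ : ℝ => (1:ℝ)) (Set.Ioc (0:ℝ) T) volume :=
      integrableOn_const (by rw [Real.volume_Ioc]; exact ENNReal.ofReal_lt_top.ne)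
    refine Integrable.mono' (hconst.add hsqOn) hmeas.norm ?_
    refine ae_of_all _ fun s => ?_
    rw [Real.norm_eq_abs, abs_of_nonneg (norm_nonneg _)]
    simp only [Pi.add_apply]
    nlinarith [sq_nonneg (‖φ s‖ - 1)]
  have huIoc : ∀ {u v : ℝ}, u ∈ Set.Icc (0:ℝ) T → v ∈ Set.Icc (0:ℝ) T →
      Set.uIoc u v ⊆ Set.Ioc (0:ℝ) T := by
    intro u v hu hv
    rw [Set.uIoc]
    exact Set.Ioc_subset_Ioc (le_min hu.1 hv.1) (max_le hu.2 hv.2)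
  have htmem : t ∈ Set.Icc (0:ℝ) T := ⟨ht0, htT⟩
  have h0mem : (0:ℝ) ∈ Set.Icc (0:ℝ) T := ⟨le_refl 0, hT.le⟩
  have hu0t : Set.uIoc (0:ℝ) t ⊆ Set.Ioc (0:ℝ) T := huIoc h0mem htmem
  have hI4 : IntervalIntegrable (fun s => Sop' L (t - s) (φ s)) volume 0 t :=
    intInt_Sop' hL hmeas hφn hu0t t
  have hφInt0t : IntervalIntegrable (fun s => ‖φ s‖) volume 0 t := by
    rw [intervalIntegrable_iff]
    exact hφn.mono_set hu0t
  constructor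
  · -- derivative
    rw [hasDerivWithinAt_iff_tendsto_slope]
    set νdot := ∫ s in (0:ℝ)..t, Sop' L (t - s) (φ s) with hνdot
    set l := nhdsWithin t (Set.Icc (0:ℝ) T \ {t}) with hl
    have hmem : ∀ᶠ r in l, r ∈ Set.Icc (0:ℝ) T \ {t} := eventually_mem_nhdsWithin
    have hlle : l ≤ nhdsWithin t {t}ᶜ :=
      nhdsWithin_mono t (fun x hx => hx.2)
    set A : ℝ → Hsp L := fun r => ∫ s in (0:ℝ)..t,
      ((r - t)⁻¹ • (Sop L (r - s) (φ s) - Sop L (t - s) (φ s)) - Sop' L (t - s) (φ s)) with hA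
    set B : ℝ → Hsp L := fun r => (r - t)⁻¹ • ∫ s in t..r, Sop L (r - s) (φ s) with hB
    rw [← tendsto_sub_nhds_zero_iff]
    have hkey : ∀ᶠ r in l, A r + B r
        = slope (fun r => ∫ s in (0:ℝ)..r, Sop L (r - s) (φ s)) t r - νdot := by
      filter_upwards [hmem] with r hr
      have hrmem : r ∈ Set.Icc (0:ℝ) T := hr.1
      have hI1 : IntervalIntegrable (fun s => Sop L (r - s) (φ s)) volume 0 t :=
        intInt_Sop hL hmeas hφn hu0t hT.le r
      have hI3 : IntervalIntegrable (fun s => Sop L (t - s) (φ s)) volume 0 t :=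
        intInt_Sop hL hmeas hφn hu0t hT.le t
      have hI2 : IntervalIntegrable (fun s => Sop L (r - s) (φ s)) volume t r :=
        intInt_Sop hL hmeas hφn (huIoc htmem hrmem) hT.le r
      have hsplitr : ∫ s in (0:ℝ)..r, Sop L (r - s) (φ s)
          = (∫ s in (0:ℝ)..t, Sop L (r - s) (φ s)) + ∫ s in t..r, Sop L (r - s) (φ s) :=
        (intervalIntegral.integral_add_adjacent_intervals hI1 hI2).symm
      have hsub : ∫ s in (0:ℝ)..t, (Sop L (r - s) (φ s) - Sop L (t - s) (φ s))
          = (∫ s in (0:ℝ)..t, Sop L (r - s) (φ s)) - ∫ s in (0:ℝ)..t, Sop L (t - s) (φ s) :=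
        intervalIntegral.integral_sub hI1 hI3
      have hAr : A r = (r - t)⁻¹ • ((∫ s in (0:ℝ)..t, Sop L (r - s) (φ s))
          - ∫ s in (0:ℝ)..t, Sop L (t - s) (φ s)) - νdot := by
        have hsm : IntervalIntegrable
            (fun s => (r - t)⁻¹ • (Sop L (r - s) (φ s) - Sop L (t - s) (φ s))) volume 0 t :=
          (hI1.sub hI3).smul ((r - t)⁻¹)
        simp only [hA]
        rw [intervalIntegral.integral_sub hsm hI4]
        rw [intervalIntegral.integral_smul, hsub]
      rw [hAr]
      simp only [hB, slope, vsub_eq_sub]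
      rw [hsplitr]
      module
    refine Tendsto.congr' hkey ?_
    have hTA : Tendsto A l (nhds 0) := by
      have := intervalIntegral.tendsto_integral_filter_of_dominated_convergence
        (μ := volume) (a := (0:ℝ)) (b := t) (f := fun _ : ℝ => (0 : Hsp L))
        (F := fun (r : ℝ) (s : ℝ) =>
          (r - t)⁻¹ • (Sop L (r - s) (φ s) - Sop L (t - s) (φ s)) - Sop' L (t - s) (φ s))
        (bound := fun s => 2 * ‖φ s‖)
        (by
          refine Eventually.of_forall fun r => ?_
          have hφm' : AEStronglyMeasurable φ (volume.restrict (Set.uIoc (0:ℝ) t)) :=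
            hmeas.mono_measure (Measure.restrict_mono hu0t le_rfl)
          exact (((aesm_Sop hL hφm' r).sub (aesm_Sop hL hφm' t)).const_smul ((r - t)⁻¹)).sub
            (aesm_Sop' hL hφm' t))
        (by
          refine Eventually.of_forall fun r => ae_of_all _ fun s _ => ?_
          have h1 : ‖(r - t)⁻¹ • (Sop L (r - s) (φ s) - Sop L (t - s) (φ s))‖ ≤ ‖φ s‖ := by
            rw [norm_smul]
            have hlip : ‖Sop L (r - s) (φ s) - Sop L (t - s) (φ s)‖ ≤ |r - t| * ‖φ s‖ := by
              have := norm_Sop_sub_le hL (r - s) (t - s) (φ s)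
              simpa using this
            calc ‖(r - t)⁻¹‖ * ‖Sop L (r - s) (φ s) - Sop L (t - s) (φ s)‖
                ≤ |r - t|⁻¹ * (|r - t| * ‖φ s‖) := by
                  rw [Real.norm_eq_abs, abs_inv]
                  exact mul_le_mul_of_nonneg_left hlip (inv_nonneg.mpr (abs_nonneg _))
              _ ≤ 1 * ‖φ s‖ := by
                  rw [← mul_assoc]
                  apply mul_le_mul_of_nonneg_right _ (norm_nonneg _)
                  rcases eq_or_ne r t with rfl | hne
                  · simp
                  · rw [inv_mul_cancel₀ (abs_ne_zero.mpr (sub_ne_zero.mpr hne))]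
              _ = ‖φ s‖ := one_mul _
          calc ‖(r - t)⁻¹ • (Sop L (r - s) (φ s) - Sop L (t - s) (φ s)) - Sop' L (t - s) (φ s)‖
              ≤ ‖(r - t)⁻¹ • (Sop L (r - s) (φ s) - Sop L (t - s) (φ s))‖
                + ‖Sop' L (t - s) (φ s)‖ := norm_sub_le _ _
            _ ≤ ‖φ s‖ + ‖φ s‖ := add_le_add h1 (norm_Sop'_le hL _ _)
            _ = 2 * ‖φ s‖ := by ring)
        (hφInt0t.const_mul 2)
        (ae_of_all _ fun s _ => (tendsto_slope_center hL (φ s) s t).mono_left hlle)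
      simpa using this
    have hTB : Tendsto B l (nhds 0) := by
      -- continuity of the primitive of ‖φ‖
      have hprim : ContinuousWithinAt (fun b => ∫ s in (0:ℝ)..b, ‖φ s‖) (Set.Icc (0:ℝ) T) t := by
        apply intervalIntegral.continuousWithinAt_primitive (measure_singleton t)
        rw [min_self, max_eq_right hT.le]
        rw [intervalIntegrable_iff_integrableOn_Ioc_of_le hT.le]
        exact hφn
      have hF0 : Tendsto (fun r => |∫ s in t..r, ‖φ s‖|) l (nhds 0) := by
        have h1 : Tendsto (fun r => ∫ s in (0:ℝ)..r, ‖φ s‖) l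
            (nhds (∫ s in (0:ℝ)..t, ‖φ s‖)) :=
          (hprim.mono_left (nhdsWithin_mono t Set.diff_subset))
        have h2 := (h1.sub_const (∫ s in (0:ℝ)..t, ‖φ s‖)).abs
        rw [sub_self, abs_zero] at h2
        refine h2.congr' ?_
        filter_upwards [hmem] with r hr
        congr 1
        rw [intervalIntegral.integral_interval_sub_left]
        · rw [intervalIntegrable_iff]
          exact hφn.mono_set (huIoc h0mem hr.1)
        · exact hφInt0t
      refine squeeze_zero_norm' ?_ hF0
      filter_upwards [hmem] with r hr
      have hrt : r ≠ t := fun h => hr.2 (by simp [h])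
      have hb1 : ‖∫ s in t..r, Sop L (r - s) (φ s)‖ ≤ |∫ s in t..r, |r - t| * ‖φ s‖| := by
        apply intervalIntegral.norm_integral_le_abs_of_norm_le
        · refine (ae_restrict_iff' measurableSet_uIoc).mpr (ae_of_all _ fun s hs => ?_)
          have h1 : ‖Sop L (r - s) (φ s)‖ ≤ |r - s| * ‖φ s‖ := norm_Sop_le hL _ _
          have h2 : |r - s| ≤ |r - t| := by
            rw [Set.mem_uIoc] at hs
            refine abs_le.mpr ⟨?_, ?_⟩ <;>
              rcases hs with ⟨hs1, hs2⟩ | ⟨hs1, hs2⟩ <;>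
              nlinarith [le_abs_self (r - t), neg_abs_le (r - t)]
          exact h1.trans (mul_le_mul_of_nonneg_right h2 (norm_nonneg _))
        · have : IntervalIntegrable (fun s => |r - t| * ‖φ s‖) volume t r := by
            rw [intervalIntegrable_iff]
            exact (hφn.mono_set (huIoc htmem hr.1)).const_mul _
          exact this
      have hb2 : |∫ s in t..r, |r - t| * ‖φ s‖| = |r - t| * |∫ s in t..r, ‖φ s‖| := by
        rw [intervalIntegral.integral_const_mul, abs_mul, abs_abs]
      simp only [hB]
      calc ‖(r - t)⁻¹ • ∫ s in t..r, Sop L (r - s) (φ s)‖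
          = |r - t|⁻¹ * ‖∫ s in t..r, Sop L (r - s) (φ s)‖ := by
            rw [norm_smul, Real.norm_eq_abs, abs_inv]
        _ ≤ |r - t|⁻¹ * (|r - t| * |∫ s in t..r, ‖φ s‖|) := by
            apply mul_le_mul_of_nonneg_left _ (inv_nonneg.mpr (abs_nonneg _))
            rw [← hb2]; exact hb1
        _ = |∫ s in t..r, ‖φ s‖| := by
            rw [← mul_assoc, inv_mul_cancel₀ (abs_ne_zero.mpr (sub_ne_zero.mpr hrt)), one_mul]
    have := hTA.add hTB
    simpa using this
  · -- the quantitative bound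
    have h1 : ‖∫ s in (0:ℝ)..t, Sop' L (t - s) (φ s)‖ ≤ ∫ s in (0:ℝ)..t, ‖Sop' L (t - s) (φ s)‖ :=
      intervalIntegral.norm_integral_le_integral_norm ht0
    have h2 : ∫ s in (0:ℝ)..t, ‖Sop' L (t - s) (φ s)‖ ≤ ∫ s in (0:ℝ)..t, ‖φ s‖ := by
      apply intervalIntegral.integral_mono_on ht0 hI4.norm hφInt0t
      exact fun s _ => norm_Sop'_le hL _ _
    have hnn : (0:ℝ) ≤ ∫ s in (0:ℝ)..t, ‖φ s‖ :=
      intervalIntegral.integral_nonneg ht0 (fun s _ => norm_nonneg _)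
    have hsq : ‖∫ s in (0:ℝ)..t, Sop' L (t - s) (φ s)‖ ^ 2 ≤ (∫ s in (0:ℝ)..t, ‖φ s‖) ^ 2 := by
      apply pow_le_pow_left₀ (norm_nonneg _) (h1.trans h2)
    have hCS : (∫ s in (0:ℝ)..t, ‖φ s‖) ^ 2 ≤ t * ∫ s in (0:ℝ)..t, ‖φ s‖ ^ 2 := by
      apply cs_lemma ht0
      · exact (hmeas.mono_measure (Measure.restrict_mono
          (Set.Ioc_subset_Ioc le_rfl htT) le_rfl)).norm
      · exact fun s => norm_nonneg _
      · exact hsqOn.mono_set (Set.Ioc_subset_Ioc le_rfl htT)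
    have hmono : ∫ s in (0:ℝ)..t, ‖φ s‖ ^ 2 ≤ ∫ s in (0:ℝ)..T, ‖φ s‖ ^ 2 := by
      apply intervalIntegral.integral_mono_interval le_rfl ht0 htT
        (ae_of_all _ fun s => sq_nonneg _) hint
    have hnn2 : (0:ℝ) ≤ ∫ s in (0:ℝ)..t, ‖φ s‖ ^ 2 :=
      intervalIntegral.integral_nonneg ht0 (fun s _ => sq_nonneg _)
    calc ‖∫ s in (0:ℝ)..t, Sop' L (t - s) (φ s)‖ ^ 2
        ≤ t * ∫ s in (0:ℝ)..t, ‖φ s‖ ^ 2 := hsq.trans hCS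
      _ ≤ T * ∫ s in (0:ℝ)..t, ‖φ s‖ ^ 2 := mul_le_mul_of_nonneg_right htT hnn2
      _ ≤ T * ∫ s in (0:ℝ)..T, ‖φ s‖ ^ 2 := mul_le_mul_of_nonneg_left hmono hT.le

/-- Deterministic Proposition 2.1, second estimate: with
`ν_t = ∫₀ᵗ S_{t−s} φ_s ds`, the map `t ↦ ν_t` is differentiable on `[0,T]` with derivative
`ν̇_t = ∫₀ᵗ S'_{t−s} φ_s ds`, and `‖ν̇_t‖² ≤ T ∫₀ᵀ ‖φ_s‖² ds` for every `t ∈ [0,T]`. -/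
theorem stmt_11 (L : ℝ) (hL : 0 < L) (T : ℝ) (hT : 0 < T) (φ : ℝ → Hsp L)
    (hmeas : AEStronglyMeasurable φ (volume.restrict (Set.Ioc (0:ℝ) T)))
    (hint : IntervalIntegrable (fun s => ‖φ s‖ ^ 2) volume 0 T) :
    ∀ t ∈ Set.Icc (0:ℝ) T,
      HasDerivWithinAt (fun r => ∫ s in (0:ℝ)..r, Sop L (r - s) (φ s))
        (∫ s in (0:ℝ)..t, Sop' L (t - s) (φ s)) (Set.Icc (0:ℝ) T) t ∧
      ‖∫ s in (0:ℝ)..t, Sop' L (t - s) (φ s)‖ ^ 2 ≤ T * ∫ s in (0:ℝ)..T, ‖φ s‖ ^ 2 :=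
  stmt_11_aux L hL T hT φ hmeas hint
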